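/- For the string s = x^{k₁} |₁ x^{k₂} |₂ ⋯ |_{p-1} x^{k_p} with distinct positive integers k_i, k₁ maximal, the LZ77 parse without overlaps has O(p + log k₁) phrases. -/

import Mathlib

variable {α : Type*} [DecidableEq α]

/-- The length of the next greedy LZ77 phrase without overlaps: the largest
`L` such that the length-`L` prefix of the remainder `t` occurs as a substring
of the already-parsed prefix `p` (`0` if there is none). -/
def lzNoLen (p t : List α) : ℕ :=
  Nat.findGreatest (fun L => 0 < L ∧ (t.take L) <:+: p) t.length

/-- Greedy LZ77 without overlaps: `p` is the already parsed prefix, `r` the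
remainder. Each phrase is the longest nonempty prefix of `r` occurring
entirely earlier, or else a single fresh symbol. -/
def lzNoAux (p r : List α) : List (List α) :=
  match r with
  | [] => []
  | a :: r' =>
    if hL : lzNoLen p (a :: r') = 0 then [a] :: lzNoAux (p ++ [a]) r'
    else ((a :: r').take (lzNoLen p (a :: r'))) ::
      lzNoAux (p ++ (a :: r').take (lzNoLen p (a :: r'))) ((a :: r').drop (lzNoLen p (a :: r')))
termination_by r.length
decreasing_by
  · simp
  · have := Nat.pos_of_ne_zero hL
    simp only [List.length_drop, List.length_cons]
    omega

/-- The greedy LZ77 parse without overlaps. -/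
def lzNo (s : List α) : List (List α) := lzNoAux [] s

/-- The length of the next greedy LZ77 phrase with overlaps: the largest `L`
such that the length-`L` prefix of the remainder `t` can be copied from a
source occurrence starting strictly before position `|p|` (possibly
overlapping the phrase itself). -/
def lzOvLen (p t : List α) : ℕ :=
  Nat.findGreatest
    (fun L => 0 < L ∧ ∃ j < p.length, ((p ++ t.take L).drop j).take L = t.take L)
    t.length

/-- Greedy LZ77 with overlaps between phrases and their sources. -/
def lzOvAux (p r : List α) : List (List α) :=
  match r with
  | [] => []
  | a :: r' =>
    if hL : lzOvLen p (a :: r') = 0 then [a] :: lzOvAux (p ++ [a]) r'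
    else ((a :: r').take (lzOvLen p (a :: r'))) ::
      lzOvAux (p ++ (a :: r').take (lzOvLen p (a :: r'))) ((a :: r').drop (lzOvLen p (a :: r')))
termination_by r.length
decreasing_by
  · simp
  · have := Nat.pos_of_ne_zero hL
    simp only [List.length_drop, List.length_cons]
    omega

/-- The greedy LZ77 parse with overlaps. -/
def lzOv (s : List α) : List (List α) := lzOvAux [] s


/-- The string `x^{k 0} |₁ x^{k 1} |₂ ⋯ |_{p-1} x^{k (p-1)}` over the alphabet
`ℕ`, where `x` is the symbol `0` and the `i`-th separator is the symbol `i+1`. -/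
def sepString (p : ℕ) (k : Fin p → ℕ) : List ℕ :=
  ((List.ofFn (fun i : Fin p => List.replicate (k i) 0 ++ [(i : ℕ) + 1])).flatten).dropLast

omit [DecidableEq α] in
lemma replicate_infix_replicate (x : α) {m K : ℕ} (h : m ≤ K) :
    List.replicate m x <:+: List.replicate K x :=
  ⟨[], List.replicate (K - m) x, by
    simp [← List.replicate_add]
    omega⟩

lemma lzNoLen_run (P : List α) (x : α) (m : ℕ) (tl : List α) (hm : 0 < m)
    (hinf : List.replicate m x <:+: P) (ht : ∀ a ∈ tl.head?, a ∉ P) :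
    lzNoLen P (List.replicate m x ++ tl) = m := by
  have hlen : (List.replicate m x ++ tl).length = m + tl.length := by simp
  apply Nat.findGreatest_eq_iff.mpr
  refine ⟨by omega, fun _ => ⟨hm, ?_⟩, ?_⟩
  · rw [List.take_append_of_le_length (by simp), List.take_replicate]
    simpa using hinf
  · rintro n hn hn' ⟨-, hinf'⟩
    rw [hlen] at hn'
    obtain ⟨a, tl', rfl⟩ : ∃ a tl', tl = a :: tl' := by
      cases tl with
      | nil => simp at hn'; omega
      | cons a tl' => exact ⟨a, tl', rfl⟩
    have ha : a ∉ P := ht a rfl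
    apply ha
    have hmem : a ∈ (List.replicate m x ++ a :: tl').take n := by
      have : (List.replicate m x ++ a :: tl').take n
          = List.replicate m x ++ (a :: tl').take (n - m) := by
        rw [List.take_append, List.take_replicate]
        simp [Nat.min_eq_right (by omega : m ≤ n)]
      rw [this]
      have : a ∈ (a :: tl').take (n - m) := by
        obtain ⟨j, hj⟩ : ∃ j, n - m = j + 1 := ⟨n - m - 1, by omega⟩
        simp [hj, List.take_succ_cons]
      simp [this]
    exact hinf'.sublist.mem hmem

lemma lzNoLen_runA (x : α) (t n : ℕ) (tl : List α) (ht0 : 0 < t) (htn : t ≤ n)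
    (htl : ∀ a ∈ tl.head?, a ≠ x) :
    lzNoLen (List.replicate t x) (List.replicate n x ++ tl) = t := by
  have hlen : (List.replicate n x ++ tl).length = n + tl.length := by simp
  apply Nat.findGreatest_eq_iff.mpr
  refine ⟨by omega, fun _ => ⟨ht0, ?_⟩, ?_⟩
  · rw [List.take_append_of_le_length (by simpa using htn), List.take_replicate]
    simp [Nat.min_eq_left htn]
  · rintro L hL hL' ⟨-, hinf'⟩
    rw [hlen] at hL'
    by_cases hLn : L ≤ n
    · rw [List.take_append_of_le_length (by simpa using hLn), List.take_replicate,
        Nat.min_eq_left hLn] at hinf'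
      have := hinf'.sublist.length_le
      simp at this; omega
    · push_neg at hLn
      obtain ⟨a, tl', rfl⟩ : ∃ a tl', tl = a :: tl' := by
        cases tl with
        | nil => simp at hL'; omega
        | cons a tl' => exact ⟨a, tl', rfl⟩
      have ha : a ≠ x := htl a rfl
      apply ha
      have hmem : a ∈ (List.replicate n x ++ a :: tl').take L := by
        have : (List.replicate n x ++ a :: tl').take L
            = List.replicate n x ++ (a :: tl').take (L - n) := by
          rw [List.take_append, List.take_replicate]
          simp [Nat.min_eq_right (by omega : n ≤ L)]
        rw [this]
        have : a ∈ (a :: tl').take (L - n) := by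
          obtain ⟨j, hj⟩ : ∃ j, L - n = j + 1 := ⟨L - n - 1, by omega⟩
          simp [hj, List.take_succ_cons]
        simp [this]
      have := hinf'.sublist.mem hmem
      exact (List.eq_of_mem_replicate this)

lemma lzNoAux_fresh (P : List α) (a : α) (r : List α) (ha : a ∉ P) :
    lzNoAux P (a :: r) = [a] :: lzNoAux (P ++ [a]) r := by
  rw [lzNoAux]
  have : lzNoLen P (a :: r) = 0 := by
    apply Nat.findGreatest_eq_zero_iff.mpr
    rintro n hn - ⟨-, hinf⟩
    apply ha
    have : a ∈ (a :: r).take n := by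
      cases n with
      | zero => omega
      | succ m => simp [List.take_succ_cons]
    exact hinf.sublist.mem this
  simp [this]

lemma lzNoAux_chunk (P c tl : List α) (hc : c ≠ [])
    (hL : lzNoLen P (c ++ tl) = c.length) :
    lzNoAux P (c ++ tl) = c :: lzNoAux (P ++ c) tl := by
  obtain ⟨a, c', rfl⟩ : ∃ a c', c = a :: c' := by
    cases c with
    | nil => exact absurd rfl hc
    | cons a c' => exact ⟨a, c', rfl⟩
  rw [List.cons_append, lzNoAux]
  rw [List.cons_append] at hL
  simp only [hL]
  rw [dif_neg (by simp), ← List.cons_append, List.take_left' (by simp),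
    List.drop_left' (by simp)]

/-- Doubling phase count. -/
lemma countE (x : α) (n : ℕ) : ∀ (t : ℕ) (tl : List α), 0 < t →
    (∀ a ∈ tl.head?, a ≠ x) →
    (lzNoAux (List.replicate t x) (List.replicate n x ++ tl)).length + Nat.log 2 t ≤
      Nat.log 2 (n + t) + 1 + (lzNoAux (List.replicate (t + n) x) tl).length := by
  induction n using Nat.strong_induction_on with
  | _ n ih =>
    intro t tl ht htl
    rcases Nat.eq_zero_or_pos n with rfl | hn
    · simp
      have : Nat.log 2 t ≤ Nat.log 2 (0 + t) := by simp
      omega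
    rcases le_or_gt n t with hnt | htn
    · -- one phrase consumes the whole run
      have hL : lzNoLen (List.replicate t x) (List.replicate n x ++ tl)
          = (List.replicate n x).length := by
        rw [List.length_replicate]
        exact lzNoLen_run _ x n tl hn (replicate_infix_replicate x hnt)
          (fun a hha hmem => htl a hha (List.eq_of_mem_replicate hmem))
      rw [lzNoAux_chunk _ _ _ (by simp; omega) hL, ← List.replicate_add]
      simp only [List.length_cons]
      have h1 : Nat.log 2 t ≤ Nat.log 2 (n + t) := Nat.log_mono_right (by omega)
      have h2 : List.replicate (t + n) x = List.replicate (t + n) x := rfl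
      omega
    · -- one phrase of length t, then recurse with doubled prefix
      have hrw : List.replicate n x ++ tl
          = List.replicate t x ++ (List.replicate (n - t) x ++ tl) := by
        rw [← List.append_assoc, ← List.replicate_add]
        congr 2
        omega
      have hL : lzNoLen (List.replicate t x) (List.replicate n x ++ tl) = t :=
        lzNoLen_runA x t n tl ht (by omega) htl
      rw [hrw] at hL
      have hL' : lzNoLen (List.replicate t x)
          (List.replicate t x ++ (List.replicate (n - t) x ++ tl))
          = (List.replicate t x).length := by simpa using hL
      rw [hrw, lzNoAux_chunk _ _ _ (by simp; omega) hL', ← List.replicate_add]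
      simp only [List.length_cons]
      have hih := ih (n - t) (by omega) (t + t) tl (by omega) htl
      have heq : t + t + (n - t) = t + n := by omega
      rw [heq] at hih
      have hlog : Nat.log 2 (t + t) = Nat.log 2 t + 1 := by
        have : t + t = t * 2 := by omega
        rw [this, Nat.log_mul_base (by norm_num) (by omega)]
      have heq2 : n - t + (t + t) = n + t := by omega
      rw [heq2, hlog] at hih
      omega

/-- The tail of the separated string: `i :: x^{m₁} ++ (i+1) :: x^{m₂} ++ ⋯`. -/
def restS : ℕ → List ℕ → List ℕ
  | _, [] => []
  | i, m :: ms => i :: (List.replicate m 0 ++ restS (i + 1) ms)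

/-- Counting phrases in the tail: two per block. -/
lemma countC : ∀ (ms : List ℕ) (i K : ℕ) (P : List ℕ), 0 < i →
    List.replicate K 0 <:+: P → (∀ m ∈ ms, 0 < m ∧ m ≤ K) →
    (∀ j, i ≤ j → j ∉ P) →
    (lzNoAux P (restS i ms)).length ≤ 2 * ms.length := by
  intro ms
  induction ms with
  | nil => intro i K P _ _ _ _; simp [restS, lzNoAux]
  | cons m ms ihm =>
    intro i K P hi hinf hms hP
    obtain ⟨hm0, hmK⟩ := hms m (by simp)
    rw [restS, lzNoAux_fresh P i _ (hP i le_rfl)]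
    have hinf' : List.replicate m 0 <:+: P ++ [i] :=
      ((replicate_infix_replicate 0 hmK).trans hinf).trans ⟨[], [i], by simp⟩
    have hhead : ∀ a ∈ (restS (i + 1) ms).head?, a ∉ P ++ [i] := by
      cases ms with
      | nil => simp [restS]
      | cons m' ms' =>
        simp only [restS, List.head?_cons, Option.mem_some_iff]
        rintro a rfl
        simp only [List.mem_append, List.mem_singleton]
        push_neg
        exact ⟨hP (i + 1) (by omega), by omega⟩
    have hL : lzNoLen (P ++ [i]) (List.replicate m 0 ++ restS (i + 1) ms)
        = (List.replicate m 0).length := by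
      rw [List.length_replicate]
      exact lzNoLen_run _ 0 m _ hm0 hinf' hhead
    rw [lzNoAux_chunk _ _ _ (by simp; omega) hL]
    simp only [List.length_cons]
    have := ihm (i + 1) K (P ++ [i] ++ List.replicate m 0) (by omega)
      (hinf.trans ⟨[], [i] ++ List.replicate m 0, by simp⟩)
      (fun m' hm' => hms m' (by simp [hm']))
      (by
        intro j hj
        simp only [List.mem_append, List.mem_singleton, List.mem_replicate]
        push_neg
        exact ⟨⟨hP j (by omega), by omega⟩, fun _ => by omega⟩)
    omega

def buildS : ℕ → List ℕ → List ℕ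
  | _, [] => []
  | i, m :: ms => List.replicate m 0 ++ i :: buildS (i + 1) ms

lemma flatten_ofFn_eq_buildS : ∀ (p : ℕ) (k : Fin p → ℕ) (off : ℕ),
    (List.ofFn (fun i : Fin p => List.replicate (k i) 0 ++ [off + (i : ℕ) + 1])).flatten
      = buildS (off + 1) (List.ofFn k) := by
  intro p
  induction p with
  | zero => intro k off; simp [buildS]
  | succ q ih =>
    intro k off
    rw [List.ofFn_succ, List.ofFn_succ (f := k)]
    simp only [List.flatten_cons, buildS]
    have := ih (fun i => k i.succ) (off + 1)
    rw [show (fun i : Fin q => List.replicate (k i.succ) 0 ++ [off + 1 + (i : ℕ) + 1])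
        = (fun i : Fin q => List.replicate (k i.succ) 0 ++ [off + ((i : ℕ) + 1) + 1]) by
      funext i; congr 2; omega] at this
    simp only [Fin.val_succ] at *
    rw [← this]
    simp

lemma dropLast_buildS : ∀ (ms : List ℕ) (m i : ℕ),
    (buildS i (m :: ms)).dropLast = List.replicate m 0 ++ restS i ms := by
  intro ms
  induction ms with
  | nil =>
    intro m i
    show (List.replicate m 0 ++ [i]).dropLast = _
    rw [List.dropLast_concat]
    simp [restS]
  | cons m' ms ih =>
    intro m i
    show (List.replicate m 0 ++ i :: buildS (i + 1) (m' :: ms)).dropLast = _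
    have hne : i :: buildS (i + 1) (m' :: ms) ≠ [] := by simp
    rw [List.dropLast_append_of_ne_nil hne]
    have hne2 : buildS (i + 1) (m' :: ms) ≠ [] := by
      show List.replicate m' 0 ++ (i + 1) :: buildS (i + 2) ms ≠ []
      simp
    rw [List.dropLast_cons_of_ne_nil hne2, ih m' (i + 1)]
    simp [restS]

lemma sepString_eq (q : ℕ) (k : Fin (q + 1) → ℕ) :
    sepString (q + 1) k
      = List.replicate (k 0) 0 ++ restS 1 (List.ofFn (fun i : Fin q => k i.succ)) := by
  unfold sepString
  have h0 : (fun i : Fin (q + 1) => List.replicate (k i) 0 ++ [(i : ℕ) + 1])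
      = (fun i : Fin (q + 1) => List.replicate (k i) 0 ++ [0 + (i : ℕ) + 1]) := by
    funext i; congr 2; omega
  rw [h0, flatten_ofFn_eq_buildS (q + 1) k 0, List.ofFn_succ, dropLast_buildS]

lemma countMain (q : ℕ) (k : Fin (q + 1) → ℕ) (hpos : ∀ i, 0 < k i)
    (hmax : ∀ i, k i ≤ k 0) :
    (lzNo (sepString (q + 1) k)).length ≤ 2 * (q + 1) + Nat.log 2 (k 0) := by
  rw [sepString_eq]
  set tl := restS 1 (List.ofFn (fun i : Fin q => k i.succ)) with htl
  have hk0 : 0 < k 0 := hpos 0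
  have hrep : List.replicate (k 0) 0 ++ tl = 0 :: (List.replicate (k 0 - 1) 0 ++ tl) := by
    rw [show k 0 = 1 + (k 0 - 1) by omega, List.replicate_add]
    simp
  show (lzNoAux [] (List.replicate (k 0) 0 ++ tl)).length ≤ _
  rw [hrep, lzNoAux_fresh [] 0 _ (by simp)]
  have hhead : ∀ a ∈ tl.head?, a ≠ (0 : ℕ) := by
    rw [htl]
    cases (List.ofFn (fun i : Fin q => k i.succ)) with
    | nil => simp [restS]
    | cons m ms => simp [restS]
  have hE := countE 0 (k 0 - 1) 1 tl (by omega) hhead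
  rw [show (1 : ℕ) + (k 0 - 1) = k 0 by omega, show k 0 - 1 + 1 = k 0 by omega,
    Nat.log_one_right] at hE
  have hC := countC (List.ofFn (fun i : Fin q => k i.succ)) 1 (k 0)
    (List.replicate (k 0) 0) (by omega) (List.infix_rfl)
    (by
      intro m hm
      rw [List.mem_ofFn] at hm
      obtain ⟨i, rfl⟩ := hm
      exact ⟨hpos _, hmax _⟩)
    (by
      intro j hj
      rw [List.mem_replicate]
      rintro ⟨-, rfl⟩
      omega)
  rw [← htl] at hC
  have h01 : ([] : List ℕ) ++ [0] = List.replicate 1 0 := by simp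
  rw [h01] at *
  have hlen : (List.ofFn fun i : Fin q => k i.succ).length = q := by simp
  simp only [List.length_cons]
  omega

theorem lzNo_sepString_le' :
    ∃ c : ℝ, 0 < c ∧ ∀ (p : ℕ) (hp : 0 < p) (k : Fin p → ℕ),
      (∀ i, 0 < k i) → Function.Injective k → (∀ i, k i ≤ k ⟨0, hp⟩) →
      ((lzNo (sepString p k)).length : ℝ) ≤ c * (p + Real.log (k ⟨0, hp⟩)) := by
  have hlog2 : (0 : ℝ) < Real.log 2 := Real.log_pos (by norm_num)
  have hlog2' : Real.log 2 < 1 := by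
    calc Real.log 2 < 0.6931471808 := Real.log_two_lt_d9
    _ < 1 := by norm_num
  refine ⟨2 / Real.log 2, by positivity, ?_⟩
  intro p hp k hpos hinj hmax
  obtain ⟨q, rfl⟩ : ∃ q, p = q + 1 := ⟨p - 1, by omega⟩
  have h0 : (⟨0, hp⟩ : Fin (q + 1)) = 0 := rfl
  rw [h0] at *
  have hcount := countMain q k hpos hmax
  set K := k 0 with hK
  set L := Nat.log 2 K with hL
  have hKpos : 0 < K := hpos 0
  have hpow : ((2 : ℝ)) ^ L ≤ (K : ℝ) := by
    have := Nat.pow_log_le_self 2 (by omega : K ≠ 0)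
    exact_mod_cast this
  have hlogK : (L : ℝ) * Real.log 2 ≤ Real.log K := by
    calc (L : ℝ) * Real.log 2 = Real.log ((2 : ℝ) ^ L) := (Real.log_pow 2 L).symm
    _ ≤ Real.log K := Real.log_le_log (by positivity) hpow
  have hlogK0 : (0 : ℝ) ≤ Real.log K :=
    le_trans (by positivity) hlogK
  have hcount' : ((lzNo (sepString (q + 1) k)).length : ℝ) ≤ 2 * (q + 1) + L := by
    exact_mod_cast hcount
  rw [div_mul_eq_mul_div, le_div_iff₀ hlog2]
  push_cast
  nlinarith [hcount', hlogK, hlogK0, hlog2, hlog2',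
    mul_le_mul_of_nonneg_right hcount' (le_of_lt hlog2)]
/-- for `s = x^{k₁} |₁ x^{k₂} |₂ ⋯ |_{p-1} x^{k_p}` with the
`k i` distinct positive integers and `k₁ = k 0` maximal, the greedy LZ77 parse
without overlaps has `O(p + log k₁)` phrases. -/
theorem lzNo_sepString_le :
    ∃ c : ℝ, 0 < c ∧ ∀ (p : ℕ) (hp : 0 < p) (k : Fin p → ℕ),
      (∀ i, 0 < k i) → Function.Injective k → (∀ i, k i ≤ k ⟨0, hp⟩) →
      ((lzNo (sepString p k)).length : ℝ) ≤ c * (p + Real.log (k ⟨0, hp⟩)) := by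
  exact lzNo_sepString_le'
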